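/- Let m, r ∈ Z^d with N-optimal presentations m = [v_i; p_i] and r = [w_i; q_i], and suppose m has a cut at ℓ for parameters (N, θ', μ', τ), i.e. p_ℓ < μ' N^τ and p_{ℓ+1} > θ' N^{4dτ}. If allowable parameters θ < θ', μ > μ' satisfy |r - m| < min(κ^{-1}(μ-μ')N^{τ-1}, κ^{-1}(θ'-θ)N^{4dτ-1}), then: (1) r has a cut at the same ℓ for parameters (N, θ, μ, τ); (2) the spans ⟨w_1,...,w_ℓ⟩ and ⟨v_1,...,v_ℓ⟩ coincide; (3) [w_i; q_i]_ℓ is the N-optimal presentation of the translated subspace [v_i; p_i]_ℓ + (r - m). -/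

import Mathlib

/-- Integer inner product on `ℤ^d`. -/
def dotZ {d : ℕ} (v x : Fin d → ℤ) : ℤ := ∑ i, v i * x i

/-- Euclidean norm of an integer vector. -/
noncomputable def enormZ {d : ℕ} (v : Fin d → ℤ) : ℝ :=
  Real.sqrt (∑ i, ((v i : ℝ)) ^ 2)

/-- `v ∈ B_N`: nonzero integer vector of Euclidean norm `< κN`. -/
def inBall (d : ℕ) (κ N : ℝ) (v : Fin d → ℤ) : Prop :=
  v ≠ 0 ∧ enormZ v < κ * N

/-- Lexicographic strict order on integer tuples. -/
def lexLt {ι : Type*} [LT ι] (x y : ι → ℤ) : Prop :=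
  ∃ i, (∀ j, j < i → x j = y j) ∧ x i < y i

/-- The sign-lexicographic order. -/
def slex {ι : Type*} [LT ι] (x y : ι → ℤ) : Prop :=
  lexLt (fun i => |x i|) (fun i => |y i|) ∨ ((∀ i, |x i| = |y i|) ∧ lexLt y x)

/-- The display vector `(p₁,…,p_l; v₁,…,v_l)` of a presentation, used for the
sign-lexicographic comparison of presentations. -/
def presVec (d l : ℕ) (p : ℕ → ℕ) (v : ℕ → Fin d → ℤ) :
    Lex (Fin l ⊕ Lex (Fin l × Fin d)) → ℤ :=
  fun i => Sum.elim (fun a : Fin l => (p a.1 : ℤ))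
    (fun b : Lex (Fin l × Fin d) => v (ofLex b).1.1 (ofLex b).2) (ofLex i)

/-- `(p, v)` is a presentation of `A ⊆ ℤ^d` by `l` independent equations
`(vᵢ, x) = pᵢ` with `vᵢ ∈ B_N`. -/
def IsPresOf (d l : ℕ) (κ N : ℝ) (A : Set (Fin d → ℤ))
    (p : ℕ → ℕ) (v : ℕ → Fin d → ℤ) : Prop :=
  (∀ i < l, inBall d κ N (v i)) ∧
  LinearIndependent ℝ (fun i : Fin l => fun j => ((v i.1 j : ℝ))) ∧
  A = {x | ∀ i < l, dotZ (v i) x = (p i : ℤ)}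

/-- `(p, v)` is the `N`-optimal presentation of `A`: minimal in the
sign-lexicographic order among all presentations. -/
def IsOptPres (d l : ℕ) (κ N : ℝ) (A : Set (Fin d → ℤ))
    (p : ℕ → ℕ) (v : ℕ → Fin d → ℤ) : Prop :=
  IsPresOf d l κ N A p v ∧
  ∀ q w, IsPresOf d l κ N A q w →
    presVec d l p v = presVec d l q w ∨ slex (presVec d l p v) (presVec d l q w)

/-- A presentation (indexed 1-based via `p (i-1)`, so `p_ℓ = p (ℓ - 1)`) has a cut at
`ℓ` for the parameters `(N, θ, μ, τ)`: `p_ℓ < μ N^τ` and `p_{ℓ+1} > θ N^{4dτ}`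
(with the conventions `p₀ = 0`, `p_{d+1} = ∞`). -/
def HasCutAt (d : ℕ) (N θ μ τ : ℝ) (p : ℕ → ℕ) (ℓ : ℕ) : Prop :=
  ℓ ≤ d ∧ (ℓ = 0 ∨ ((p (ℓ - 1) : ℝ)) < μ * N ^ τ) ∧
    (ℓ = d ∨ θ * N ^ (4 * (d : ℝ) * τ) < (p ℓ : ℝ))

/-- The parameters `(N, θ, μ, τ)` are allowable, together with the defining relations
among the fixed constants `τ₀, τ₁, c, C, N₀` of the paper. -/
def Allowable (d n : ℕ) (κ τ0 τ1 cc CC N0 N θ μ τ : ℝ) : Prop :=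
  max ((d : ℝ) ^ 2 + n) 12 < τ0 ∧
  τ1 = (4 * (d : ℝ)) ^ (d + 1) * (τ0 + 1) ∧
  0 < cc ∧ cc ≤ 1 / 2 ∧ 4 ≤ CC ∧
  N0 = (Nat.factorial (d + 1) : ℝ) * κ ^ (d + 1) * CC / cc ∧
  1 ≤ κ ∧ τ0 ≤ τ ∧ τ ≤ τ1 / (4 * d) ∧
  cc < θ ∧ θ < CC ∧ cc < μ ∧ μ < CC ∧ N0 < N



namespace St14

variable {d : ℕ}



def castR (v : Fin d → ℤ) : Fin d → ℝ := fun j => (v j : ℝ)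

def rdot (x y : Fin d → ℝ) : ℝ := ∑ i, x i * y i

lemma rdot_cast (v w : Fin d → ℤ) : rdot (castR v) (castR w) = ((dotZ v w : ℤ) : ℝ) := by
  simp [rdot, castR, dotZ]

lemma rdot_comm (x y : Fin d → ℝ) : rdot x y = rdot y x := by
  simp [rdot, mul_comm]

lemma rdot_sub_right (x a b : Fin d → ℝ) : rdot x (a - b) = rdot x a - rdot x b := by
  simp [rdot, mul_sub, Finset.sum_sub_distrib]

lemma rdot_add_right (x a b : Fin d → ℝ) : rdot x (a + b) = rdot x a + rdot x b := by
  simp [rdot, mul_add, Finset.sum_add_distrib]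

lemma eq_zero_of_rdot_self (x : Fin d → ℝ) (h : rdot x x = 0) : x = 0 := by
  have h2 : ∀ i ∈ Finset.univ, (0:ℝ) ≤ x i * x i := fun i _ => mul_self_nonneg _
  funext i
  have := (Finset.sum_eq_zero_iff_of_nonneg h2).1 h i (Finset.mem_univ i)
  have := mul_self_eq_zero.1 this
  simpa using this

/-- `w ↦ rdot w z` as a linear map. -/
def rdotL (z : Fin d → ℝ) : (Fin d → ℝ) →ₗ[ℝ] ℝ where
  toFun w := rdot w z
  map_add' a b := by simp [rdot, add_mul, Finset.sum_add_distrib]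
  map_smul' c a := by simp [rdot, Finset.mul_sum, mul_assoc]

lemma rdot_eq_zero_of_mem_span {S : Set (Fin d → ℝ)} {z : Fin d → ℝ}
    (hS : ∀ g ∈ S, rdot g z = 0) {w : Fin d → ℝ} (hw : w ∈ Submodule.span ℝ S) :
    rdot w z = 0 := by
  have : Submodule.span ℝ S ≤ LinearMap.ker (rdotL z) := by
    rw [Submodule.span_le]
    intro g hg
    exact hS g hg
  exact this hw

lemma dotZ_sub (v x y : Fin d → ℤ) : dotZ v (x - y) = dotZ v x - dotZ v y := by
  simp [dotZ, mul_sub, Finset.sum_sub_distrib]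

lemma dotZ_add (v x y : Fin d → ℤ) : dotZ v (x + y) = dotZ v x + dotZ v y := by
  simp [dotZ, mul_add, Finset.sum_add_distrib]

lemma dotZ_neg_left (v x : Fin d → ℤ) : dotZ (-v) x = - dotZ v x := by
  simp [dotZ]

lemma enormZ_nonneg (v : Fin d → ℤ) : 0 ≤ enormZ v := Real.sqrt_nonneg _

lemma enormZ_neg (v : Fin d → ℤ) : enormZ (-v) = enormZ v := by
  simp [enormZ]

/-- Cauchy–Schwarz for integer vectors. -/
lemma abs_dotZ_le (v w : Fin d → ℤ) : |((dotZ v w : ℤ) : ℝ)| ≤ enormZ v * enormZ w := by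
  have h1 : ((dotZ v w : ℤ) : ℝ) = ∑ i, (fun i => (v i : ℝ)) i * (fun i => (w i : ℝ)) i := by
    push_cast [dotZ]; rfl
  rw [abs_le]
  constructor
  · have := Real.sum_mul_le_sqrt_mul_sqrt Finset.univ (fun i => -(v i : ℝ)) (fun i => (w i : ℝ))
    simp only [neg_mul, Finset.sum_neg_distrib, neg_sq] at this
    rw [h1]
    simp only [enormZ]
    linarith [this]
  · have := Real.sum_mul_le_sqrt_mul_sqrt Finset.univ (fun i => (v i : ℝ)) (fun i => (w i : ℝ))
    rw [h1]
    simp only [enormZ]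
    exact this




-- standard basis integer vector
def stdZ (d : ℕ) (j : Fin d) : Fin d → ℤ := fun k => if k = j then 1 else 0

lemma stdZ_ne_zero (j : Fin d) : stdZ d j ≠ 0 := by
  intro h
  have := congrFun h j
  simp [stdZ] at this

lemma enormZ_stdZ (j : Fin d) : enormZ (stdZ d j) = 1 := by
  have h : (∑ i, ((stdZ d j i : ℝ)) ^ 2) = 1 := by
    rw [Finset.sum_eq_single j]
    · simp [stdZ]
    · intro b _ hb; simp [stdZ, hb]
    · intro hb; exact absurd (Finset.mem_univ j) hb
  rw [enormZ, h, Real.sqrt_one]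

lemma span_stdZ_top : Submodule.span ℝ (Set.range fun j : Fin d => castR (stdZ d j)) = ⊤ := by
  have h : ∀ j : Fin d, castR (stdZ d j) = Pi.single j (1:ℝ) := by
    intro j; funext k
    simp [castR, stdZ, Pi.single_apply]
  have := (Pi.basisFun ℝ (Fin d)).span_eq
  have hre : (Set.range fun j : Fin d => castR (stdZ d j)) = Set.range (Pi.basisFun ℝ (Fin d)) := by
    apply congrArg Set.range
    funext j
    rw [h j, Pi.basisFun_apply]
  rw [hre]; exact this

/-- Uniqueness of integer solutions of a full-rank system. -/
lemma eq_of_rows (v : ℕ → Fin d → ℤ)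
    (hind : LinearIndependent ℝ (fun i : Fin d => castR (v i.1)))
    {x y : Fin d → ℤ} (h : ∀ i < d, dotZ (v i) x = dotZ (v i) y) : x = y := by
  rcases Nat.eq_zero_or_pos d with hd | hd
  · subst hd; funext i; exact absurd i.2 (by omega)
  have hspan : Submodule.span ℝ (Set.range fun i : Fin d => castR (v i.1)) = ⊤ := by
    have : Nonempty (Fin d) := ⟨⟨0, hd⟩⟩
    exact hind.span_eq_top_of_card_eq_finrank (by simp [Module.finrank_pi])
  set z : Fin d → ℝ := castR x - castR y with hz
  have hgen : ∀ g ∈ (Set.range fun i : Fin d => castR (v i.1)), rdot g z = 0 := by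
    rintro g ⟨i, rfl⟩
    rw [hz, rdot_sub_right, rdot_cast, rdot_cast, h i.1 i.2]
    ring
  have hzz : rdot z z = 0 :=
    rdot_eq_zero_of_mem_span hgen (by rw [hspan]; trivial)
  have := eq_zero_of_rdot_self z hzz
  funext i
  have := congrFun this i
  simp [hz, castR, sub_eq_zero] at this
  exact_mod_cast this

lemma prefix_indep {v : ℕ → Fin d → ℤ} {l : ℕ}
    (h : LinearIndependent ℝ (fun i : Fin l => castR (v i.1))) {k : ℕ} (hk : k ≤ l) :
    LinearIndependent ℝ (fun i : Fin k => castR (v i.1)) := by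
  have := h.comp (Fin.castLE hk) (Fin.castLE_injective hk)
  exact this

lemma range_prefix_eq_image {v : ℕ → Fin d → ℤ} {l : ℕ} {k : ℕ} (hk : k ≤ l) :
    (Set.range fun i : Fin k => castR (v i.1))
      = (fun i : Fin l => castR (v i.1)) '' (Set.range (Fin.castLE hk)) := by
  rw [← Set.range_comp]
  rfl

lemma not_mem_span_prefix {v : ℕ → Fin d → ℤ} {l : ℕ}
    (h : LinearIndependent ℝ (fun i : Fin l => castR (v i.1)))
    {a k : ℕ} (ha : a < l) (hka : k ≤ a) :
    castR (v a) ∉ Submodule.span ℝ (Set.range fun i : Fin k => castR (v i.1)) := by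
  have hk : k ≤ l := le_trans hka (le_of_lt ha)
  rw [range_prefix_eq_image (v := v) hk]
  have : (⟨a, ha⟩ : Fin l) ∉ Set.range (Fin.castLE hk) := by
    rintro ⟨b, hb⟩
    have : (b : ℕ) = a := congrArg Fin.val hb
    omega
  exact h.notMem_span_image this




lemma ext_family : ∀ (t k : ℕ), k + t = d → ∀ g : ℕ → Fin d → ℤ,
    LinearIndependent ℝ (fun i : Fin k => castR (g i.1)) →
    ∃ G : ℕ → Fin d → ℤ, (∀ i < k, G i = g i) ∧
      (∀ i, k ≤ i → i < d → G i ≠ 0 ∧ enormZ (G i) = 1) ∧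
      LinearIndependent ℝ (fun i : Fin d => castR (G i.1)) := by
  intro t
  induction t with
  | zero =>
    intro k hk g hg
    obtain rfl : k = d := by omega
    exact ⟨g, fun _ _ => rfl, fun i h1 h2 => absurd h1 (by omega), hg⟩
  | succ t ih =>
    intro k hk g hg
    have hkd : k < d := by omega
    set SP := Submodule.span ℝ (Set.range fun i : Fin k => castR (g i.1)) with hSP
    have hex : ∃ j : Fin d, castR (stdZ d j) ∉ SP := by
      by_contra hall
      push_neg at hall
      have htop : SP = ⊤ := by
        rw [eq_top_iff, ← span_stdZ_top]
        apply Submodule.span_le.2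
        rintro _ ⟨j, rfl⟩
        exact hall j
      have h1 : Module.finrank ℝ SP = d := by
        rw [htop, finrank_top, Module.finrank_pi]; simp
      have h2 : Module.finrank ℝ SP ≤ k := by
        have := finrank_span_le_card (R := ℝ) (Set.range fun i : Fin k => castR (g i.1))
        refine le_trans this ?_
        rw [Set.toFinset_range]
        exact le_trans (Finset.card_image_le) (by simp)
      omega
    obtain ⟨j, hj⟩ := hex
    set g' : ℕ → Fin d → ℤ := fun i => if i = k then stdZ d j else g i with hg'
    have hsn : (fun i : Fin (k+1) => castR (g' i.1))
        = Fin.snoc (fun i : Fin k => castR (g i.1)) (castR (stdZ d j)) := by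
      funext i
      by_cases hik : (i : ℕ) < k
      · have h1 : g' i.1 = g i.1 := by
          simp only [hg']; rw [if_neg (by omega)]
        have h2 : i = Fin.castSucc ⟨i.1, hik⟩ := Fin.ext rfl
        rw [h2, Fin.snoc_castSucc]
        exact congrArg castR h1
      · have hik' : (i : ℕ) = k := by omega
        have h2 : i = Fin.last k := Fin.ext (by simpa using hik')
        rw [h2, Fin.snoc_last]
        have h1 : g' (Fin.last k).1 = stdZ d j := by
          simp only [hg']; rw [if_pos (by simp)]
        rw [h1]
    have hg'i : LinearIndependent ℝ (fun i : Fin (k+1) => castR (g' i.1)) := by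
      rw [hsn]
      exact linearIndependent_fin_snoc.2 ⟨hg, hj⟩
    obtain ⟨G, hG1, hG2, hG3⟩ := ih (k+1) (by omega) g' hg'i
    refine ⟨G, ?_, ?_, hG3⟩
    · intro i hi
      rw [hG1 i (by omega)]
      simp only [hg']; rw [if_neg (by omega)]
    · intro i h1 h2
      by_cases hik : i = k
      · have hGi : G i = stdZ d j := by
          rw [hG1 i (by omega), hg']
          simp [hik]
        rw [hGi]
        exact ⟨stdZ_ne_zero j, enormZ_stdZ j⟩
      · exact hG2 i (by omega) h2




lemma dotZ_smul_left (c : ℤ) (v x : Fin d → ℤ) : dotZ (c • v) x = c * dotZ v x := by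
  simp [dotZ, Finset.mul_sum, mul_assoc]

lemma castR_smul (c : ℤ) (v : Fin d → ℤ) : castR (c • v) = (c : ℝ) • castR v := by
  funext i; simp [castR]

lemma lex_sum_cases {α β : Type*} (k : Lex (α ⊕ β)) :
    (∃ a, k = toLex (Sum.inl a)) ∨ (∃ b, k = toLex (Sum.inr b)) := by
  rcases h : ofLex k with a | b
  · exact Or.inl ⟨a, by rw [← h]; rfl⟩
  · exact Or.inr ⟨b, by rw [← h]; rfl⟩

lemma mem_of_pres {l : ℕ} {κ N : ℝ} {A : Set (Fin d → ℤ)} {p : ℕ → ℕ} {v : ℕ → Fin d → ℤ}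
    (h : IsPresOf d l κ N A p v) {x : Fin d → ℤ} (hx : x ∈ A) :
    ∀ i < l, dotZ (v i) x = (p i : ℤ) := by
  have := h.2.2
  rw [this] at hx
  exact hx

lemma opt_min {κ N : ℝ} {m : Fin d → ℤ} {pm : ℕ → ℕ} {vm : ℕ → Fin d → ℤ}
    (hκN : 1 < κ * N)
    (hm : IsOptPres d d κ N {m} pm vm) {j : ℕ} (hj : j < d) {u : Fin d → ℤ}
    (hu : inBall d κ N u)
    (husp : castR u ∉ Submodule.span ℝ (Set.range fun i : Fin j => castR (vm i.1))) :
    (pm j : ℤ) ≤ |dotZ u m| := by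
  have hmm : ∀ i < d, dotZ (vm i) m = (pm i : ℤ) := mem_of_pres hm.1 rfl
  by_contra hlt
  push_neg at hlt
  -- build a competing presentation
  set base : ℕ → Fin d → ℤ := fun i => if i < j then vm i else u with hbase
  have hbase_ind : LinearIndependent ℝ (fun i : Fin (j+1) => castR (base i.1)) := by
    have hsn : (fun i : Fin (j+1) => castR (base i.1))
        = Fin.snoc (fun i : Fin j => castR (vm i.1)) (castR u) := by
      funext i
      by_cases hik : (i : ℕ) < j
      · have h1 : base i.1 = vm i.1 := by rw [hbase]; simp [hik]
        have h2 : i = Fin.castSucc ⟨i.1, hik⟩ := Fin.ext rfl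
        rw [h2, Fin.snoc_castSucc]
        exact congrArg castR h1
      · have h2 : i = Fin.last j := Fin.ext (by simp; omega)
        rw [h2, Fin.snoc_last]
        have h1 : base (Fin.last j).1 = u := by rw [hbase]; simp
        rw [h1]
    rw [hsn]
    exact linearIndependent_fin_snoc.2 ⟨prefix_indep hm.1.2.1 (le_of_lt hj), husp⟩
  obtain ⟨G, hG1, hG2, hG3⟩ := ext_family (d - (j+1)) (j+1) (by omega) base hbase_ind
  have hGi : ∀ i < j, G i = vm i := by
    intro i hi
    rw [hG1 i (by omega), hbase]; simp [hi]
  have hGj : G j = u := by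
    rw [hG1 j (by omega), hbase]; simp
  set εz : ℕ → ℤ := fun i => if dotZ (G i) m < 0 then -1 else 1 with hεz
  set G' : ℕ → Fin d → ℤ := fun i => εz i • G i with hG'
  have hq0 : ∀ i, dotZ (G' i) m = |dotZ (G i) m| := by
    intro i
    rw [hG', hεz]
    simp only
    by_cases h : dotZ (G i) m < 0
    · rw [if_pos h, dotZ_smul_left, abs_of_neg h]; ring
    · rw [if_neg h, dotZ_smul_left, abs_of_nonneg (by omega)]; ring
  set q : ℕ → ℕ := fun i => (dotZ (G' i) m).toNat with hqdef
  have hqcast : ∀ i, (q i : ℤ) = |dotZ (G i) m| := by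
    intro i
    rw [hqdef]
    simp only
    rw [hq0 i, Int.toNat_of_nonneg (abs_nonneg _)]
  have hballG : ∀ i < d, inBall d κ N (G i) := by
    intro i hi
    by_cases h1 : i < j
    · rw [hGi i h1]; exact hm.1.1 i (by omega)
    · by_cases h2 : i = j
      · rw [h2, hGj]; exact hu
      · obtain ⟨hne, hen⟩ := hG2 i (by omega) hi
        exact ⟨hne, by rw [hen]; exact hκN⟩
  have hG'pos : ∀ i, ¬ dotZ (G i) m < 0 → G' i = G i := by
    intro i h
    show (if dotZ (G i) m < 0 then (-1 : ℤ) else 1) • G i = G i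
    rw [if_neg h, one_smul]
  have hG'neg : ∀ i, dotZ (G i) m < 0 → G' i = -(G i) := by
    intro i h
    show (if dotZ (G i) m < 0 then (-1 : ℤ) else 1) • G i = -(G i)
    rw [if_pos h]
    funext c; simp
  have hball : ∀ i < d, inBall d κ N (G' i) := by
    intro i hi
    by_cases h : dotZ (G i) m < 0
    · rw [hG'neg i h]
      exact ⟨neg_ne_zero.2 (hballG i hi).1, by rw [enormZ_neg]; exact (hballG i hi).2⟩
    · rw [hG'pos i h]
      exact hballG i hi
  have hLI' : LinearIndependent ℝ (fun i : Fin d => castR (G' i.1)) := by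
    set εu : Fin d → ℝˣ := fun i => if dotZ (G i.1) m < 0 then -1 else 1 with hεu
    have heq : (fun i : Fin d => castR (G' i.1)) = (εu • fun i : Fin d => castR (G i.1)) := by
      funext i
      show castR ((if dotZ (G i.1) m < 0 then (-1 : ℤ) else 1) • G i.1)
        = (if dotZ (G i.1) m < 0 then (-1 : ℝˣ) else 1) • castR (G i.1)
      by_cases h : dotZ (G i.1) m < 0
      · rw [if_pos h, if_pos h, castR_smul]; norm_num
      · rw [if_neg h, if_neg h, castR_smul]; norm_num
    rw [heq]
    exact hG3.units_smul εu
  have hA : ({m} : Set (Fin d → ℤ)) = {x | ∀ i < d, dotZ (G' i) x = (q i : ℤ)} := by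
    apply Set.ext
    intro x
    constructor
    · rintro rfl
      intro i hi
      rw [hqcast i, ← hq0 i]
    · intro hx
      have : x = m := by
        apply eq_of_rows G' hLI'
        intro i hi
        rw [hx i hi, hqcast i, ← hq0 i]
      rw [this]; rfl
  have hcmp := hm.2 q G' ⟨hball, hLI', hA⟩
  set x := presVec d d pm vm with hx
  set y := presVec d d q G' with hy
  set i0 : Lex (Fin d ⊕ Lex (Fin d × Fin d)) := toLex (Sum.inl ⟨j, hj⟩) with hi0
  have hx0 : x i0 = (pm j : ℤ) := rfl
  have hy0 : y i0 = |dotZ u m| := by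
    have : y i0 = (q j : ℤ) := rfl
    rw [this, hqcast j, hGj]
  have hlt2 : y i0 < x i0 := by rw [hx0, hy0]; exact hlt
  have hpre : ∀ k, k < i0 → x k = y k := by
    intro k hk
    rcases lex_sum_cases k with ⟨a, rfl⟩ | ⟨b, rfl⟩
    · have ha : a < (⟨j, hj⟩ : Fin d) := by
        rw [hi0] at hk
        exact Sum.Lex.inl_lt_inl_iff.1 hk
      have haj : a.1 < j := ha
      have hxk : x (toLex (Sum.inl a)) = (pm a.1 : ℤ) := rfl
      have hyk : y (toLex (Sum.inl a)) = (q a.1 : ℤ) := rfl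
      rw [hxk, hyk, hqcast a.1, hGi a.1 haj, hmm a.1 (by omega)]
      rw [abs_of_nonneg (by positivity)]
    · exfalso
      rw [hi0] at hk
      exact Sum.lex_inr_inl hk
  have habs0 : |x i0| = (pm j : ℤ) := by rw [hx0]; exact abs_of_nonneg (by positivity)
  have habs0' : |y i0| = |dotZ u m| := by rw [hy0, abs_abs]
  rcases hcmp with heq | hslex
  · have h2 := congrFun heq i0
    rw [hx0] at h2
    rw [hy0] at h2
    omega
  · rcases hslex with ⟨i, hp, hli⟩ | ⟨hab, _⟩
    · simp only at hli
      rcases lt_trichotomy i i0 with h | h | h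
      · rw [hpre i h] at hli
        exact lt_irrefl _ hli
      · subst h
        rw [habs0, habs0'] at hli
        omega
      · have := hp i0 h
        simp only at this
        rw [habs0, habs0'] at this
        omega
    · have := hab i0
      rw [habs0, habs0'] at this
      omega





lemma transfer {ι κ' : Type*} [LinearOrder ι] [LinearOrder κ'] {e : ι → κ'}
    (hmono : StrictMono e)
    {x : κ' → ℤ} {y : κ' → ℤ} {x' : ι → ℤ} {y' : ι → ℤ}
    (hx : ∀ i, x (e i) = x' i) (hy : ∀ i, y (e i) = y' i)
    (hoff : ∀ k, x k ≠ y k → ∃ i, k = e i)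
    (h : x = y ∨ slex x y) : x' = y' ∨ slex x' y' := by
  rcases h with heq | hsl
  · left
    funext i
    rw [← hx i, ← hy i, heq]
  · rcases hsl with ⟨i, hp, hl⟩ | ⟨hab, i, hp, hl⟩
    · simp only at hl hp
      have hne : x i ≠ y i := by
        intro hc
        rw [hc] at hl
        exact lt_irrefl _ hl
      obtain ⟨i', rfl⟩ := hoff i hne
      right; left
      refine ⟨i', fun j' hj' => ?_, ?_⟩
      · have := hp (e j') (hmono hj')
        simp only [hx j', hy j'] at this
        exact this
      · simp only [hx i', hy i'] at hl
        exact hl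
    · have hne : x i ≠ y i := (ne_of_lt hl).symm
      obtain ⟨i', rfl⟩ := hoff i hne
      right; right
      refine ⟨fun i'' => by rw [← hx i'', ← hy i'']; exact hab _, i', fun j' hj' => ?_, ?_⟩
      · have := hp (e j') (hmono hj')
        rw [hx j', hy j'] at this
        exact this
      · rw [← hx i', ← hy i']
        exact hl

def emb (d ℓ : ℕ) (h : ℓ ≤ d) :
    Lex (Fin ℓ ⊕ Lex (Fin ℓ × Fin d)) → Lex (Fin d ⊕ Lex (Fin d × Fin d)) :=
  fun i => match ofLex i with
  | Sum.inl a => toLex (Sum.inl (Fin.castLE h a))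
  | Sum.inr b => toLex (Sum.inr (toLex (Fin.castLE h (ofLex b).1, (ofLex b).2)))

lemma emb_inl {d ℓ : ℕ} (h : ℓ ≤ d) (a : Fin ℓ) :
    emb d ℓ h (toLex (Sum.inl a)) = toLex (Sum.inl (Fin.castLE h a)) := rfl

lemma emb_inr {d ℓ : ℕ} (h : ℓ ≤ d) (b : Lex (Fin ℓ × Fin d)) :
    emb d ℓ h (toLex (Sum.inr b))
      = toLex (Sum.inr (toLex (Fin.castLE h (ofLex b).1, (ofLex b).2))) := rfl

lemma emb_strictMono {d ℓ : ℕ} (h : ℓ ≤ d) : StrictMono (emb d ℓ h) := by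
  intro i j hij
  rcases lex_sum_cases i with ⟨a, rfl⟩ | ⟨b, rfl⟩ <;>
    rcases lex_sum_cases j with ⟨a', rfl⟩ | ⟨b', rfl⟩
  · rw [emb_inl, emb_inl]
    rw [Sum.Lex.inl_lt_inl_iff] at hij ⊢
    exact hij
  · rw [emb_inl, emb_inr]
    exact Sum.Lex.inl_lt_inr _ _
  · exfalso
    exact Sum.lex_inr_inl hij
  · rw [emb_inr, emb_inr]
    rw [Sum.Lex.inr_lt_inr_iff] at hij ⊢
    have hb : b = toLex (ofLex b) := rfl
    have hb' : b' = toLex (ofLex b') := rfl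
    rw [hb, hb', Prod.Lex.lt_iff] at hij
    rw [Prod.Lex.lt_iff]
    rcases hij with h1 | ⟨h1, h2⟩
    · left
      exact h1
    · right
      exact ⟨by exact congrArg (Fin.castLE h) h1, h2⟩

lemma pres_compare {d ℓ : ℕ} (h : ℓ ≤ d) (pr s : ℕ → ℕ) (vr u : ℕ → Fin d → ℤ)
    (S : ℕ → ℕ) (U : ℕ → Fin d → ℤ)
    (hS : ∀ i, S i = if i < ℓ then s i else pr i)
    (hU : ∀ i, U i = if i < ℓ then u i else vr i)
    (h2 : presVec d d pr vr = presVec d d S U ∨ slex (presVec d d pr vr) (presVec d d S U)) :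
    presVec d ℓ pr vr = presVec d ℓ s u ∨ slex (presVec d ℓ pr vr) (presVec d ℓ s u) := by
  apply transfer (emb_strictMono h) (x := presVec d d pr vr) (y := presVec d d S U)
  · intro i
    rcases lex_sum_cases i with ⟨a, rfl⟩ | ⟨b, rfl⟩
    · rfl
    · rfl
  · intro i
    rcases lex_sum_cases i with ⟨a, rfl⟩ | ⟨b, rfl⟩
    · show (S (Fin.castLE h a).1 : ℤ) = (s a.1 : ℤ)
      rw [hS]
      simp [a.2]
    · show U (Fin.castLE h (ofLex b).1).1 (ofLex b).2 = u (ofLex b).1.1 (ofLex b).2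
      rw [hU]
      simp [(ofLex b).1.2]
  · intro k hk
    rcases lex_sum_cases k with ⟨a, rfl⟩ | ⟨b, rfl⟩
    · by_cases ha : a.1 < ℓ
      · refine ⟨toLex (Sum.inl ⟨a.1, ha⟩), ?_⟩
        rw [emb_inl]
        exact congrArg (fun z => toLex (Sum.inl z)) (Fin.ext rfl)
      · exfalso
        apply hk
        show (pr a.1 : ℤ) = (S a.1 : ℤ)
        rw [hS, if_neg ha]
    · by_cases hb : (ofLex b).1.1 < ℓ
      · refine ⟨toLex (Sum.inr (toLex (⟨(ofLex b).1.1, hb⟩, (ofLex b).2))), ?_⟩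
        have hcast : Fin.castLE h (⟨(ofLex b).1.1, hb⟩ : Fin ℓ) = (ofLex b).1 := Fin.ext rfl
        rw [emb_inr]
        show toLex (Sum.inr b)
          = toLex (Sum.inr (toLex (Fin.castLE h (⟨(ofLex b).1.1, hb⟩ : Fin ℓ), (ofLex b).2)))
        rw [hcast]
        rfl
      · exfalso
        apply hk
        show vr (ofLex b).1.1 (ofLex b).2 = U (ofLex b).1.1 (ofLex b).2
        rw [hU, if_neg hb]
  · exact h2




lemma kernel_complement {ℓ : ℕ} (hld : ℓ ≤ d) (vm : ℕ → Fin d → ℤ)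
    (hLI : LinearIndependent ℝ (fun i : Fin ℓ => castR (vm i.1))) :
    ∃ z : Fin (d - ℓ) → (Fin d → ℤ),
      (∀ t, ∀ i < ℓ, dotZ (vm i) (z t) = 0) ∧
      LinearIndependent ℝ (fun t => castR (z t)) := by
  obtain ⟨G, hG1, _, hG3⟩ := ext_family (d - ℓ) ℓ (by omega) vm hLI
  set M : Matrix (Fin d) (Fin d) ℤ := Matrix.of (fun i j => G i.1 j) with hM
  set castM : Matrix (Fin d) (Fin d) ℝ := (Int.castRingHom ℝ).mapMatrix M with hcM
  have hrows : (fun i : Fin d => castM i) = (fun i : Fin d => castR (G i.1)) := by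
    funext i; funext j; rfl
  have hUnitM : IsUnit castM := by
    rw [← Matrix.linearIndependent_rows_iff_isUnit]
    rw [show castM.row = (fun i : Fin d => castM i) from rfl, hrows]
    exact hG3
  have hdet : castM.det ≠ 0 := (Matrix.isUnit_iff_isUnit_det castM).1 hUnitM |>.ne_zero
  set ADJ : Matrix (Fin d) (Fin d) ℤ := M.adjugate with hADJ
  set eidx : Fin (d - ℓ) → Fin d := fun t => ⟨ℓ + t.1, by omega⟩ with heidx
  refine ⟨fun t => fun jj => ADJ jj (eidx t), ?_, ?_⟩
  · intro t i hi
    have hGi : G i = vm i := hG1 i hi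
    rw [← hGi]
    have : dotZ (G i) (fun jj => ADJ jj (eidx t)) = (M * ADJ) ⟨i, by omega⟩ (eidx t) := by
      rw [Matrix.mul_apply]
      rfl
    rw [this, Matrix.mul_adjugate, Matrix.smul_apply, Matrix.one_apply,
      if_neg (by intro hc; have := congrArg Fin.val hc; simp [heidx] at this; omega)]
    simp
  · have hadjcast : (Int.castRingHom ℝ).mapMatrix ADJ = castM.adjugate := by
      rw [hADJ, RingHom.map_adjugate]
    have hdetadj : ((Int.castRingHom ℝ).mapMatrix ADJ).det ≠ 0 := by
      rw [hadjcast, Matrix.det_adjugate]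
      exact pow_ne_zero _ hdet
    have hcols : LinearIndependent ℝ
        (fun c => Matrix.transpose ((Int.castRingHom ℝ).mapMatrix ADJ) c) :=
      Matrix.linearIndependent_cols_iff_isUnit.2
        ((Matrix.isUnit_iff_isUnit_det _).2 (isUnit_iff_ne_zero.2 hdetadj))
    have heq : (fun t => castR (fun jj => ADJ jj (eidx t)))
        = (fun c => Matrix.transpose ((Int.castRingHom ℝ).mapMatrix ADJ) c) ∘ eidx := by
      funext t; funext jj; rfl
    rw [heq]
    apply hcols.comp
    intro a b hab
    have := congrArg Fin.val hab
    simp [heidx] at this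
    exact Fin.ext this

lemma rdot_add_left (a b y : Fin d → ℝ) : rdot (a + b) y = rdot a y + rdot b y := by
  simp [rdot, add_mul, Finset.sum_add_distrib]

end St14



open St14 in
set_option maxHeartbeats 1000000 in
/-- neighborhood lemma: if `m` has a cut at `ℓ` for parameters
`(N, θ', μ', τ)` and `r` is close enough to `m`, then `r` has a cut at the same `ℓ`
for the less restrictive allowable parameters `(N, θ, μ, τ)`, the spans of the first
`ℓ` vectors of the two optimal presentations coincide, and `[w;q]_ℓ` is the
`N`-optimal presentation of the translated subspace `[v;p]_ℓ + (r - m)`. -/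
theorem statement14 (d n : ℕ) (κ τ0 τ1 cc CC N0 N θ θ' μ μ' τ : ℝ)
    (hall : Allowable d n κ τ0 τ1 cc CC N0 N θ μ τ)
    (hall' : Allowable d n κ τ0 τ1 cc CC N0 N θ' μ' τ)
    (hθ : θ < θ') (hμ : μ' < μ)
    (m r : Fin d → ℤ)
    (pm : ℕ → ℕ) (vm : ℕ → Fin d → ℤ) (pr : ℕ → ℕ) (vr : ℕ → Fin d → ℤ)
    (hm : IsOptPres d d κ N {m} pm vm)
    (hr : IsOptPres d d κ N {r} pr vr)
    (ℓ : ℕ) (hcut : HasCutAt d N θ' μ' τ pm ℓ)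
    (hdist : enormZ (r - m) <
      min (κ⁻¹ * (μ - μ') * N ^ (τ - 1))
        (κ⁻¹ * (θ' - θ) * N ^ (4 * (d : ℝ) * τ - 1))) :
    HasCutAt d N θ μ τ pr ℓ ∧
    Submodule.span ℝ (Set.range fun i : Fin ℓ => fun j => ((vr i.1 j : ℝ)))
      = Submodule.span ℝ (Set.range fun i : Fin ℓ => fun j => ((vm i.1 j : ℝ))) ∧
    IsOptPres d ℓ κ N
      ((fun x => x + (r - m)) '' {x | ∀ i < ℓ, dotZ (vm i) x = (pm i : ℤ)}) pr vr := by
  obtain ⟨h1, h2, hccpos, hcchalf, hCC4, hN0, hκ1, hτ0τ, hττ1, hccθ, hθCC, hccμ, hμCC, hN0N⟩ :=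
    hall
  obtain ⟨-, -, -, -, -, -, -, -, -, hccθ', hθ'CC, hccμ', hμ'CC, -⟩ := hall'
  obtain ⟨hld, hcutμ, hcutθ⟩ := hcut
  -- numeric facts
  have hτ12 : 12 < τ := lt_of_lt_of_le (lt_of_le_of_lt (le_max_right _ _) h1) hτ0τ
  have hd : 0 < d := by
    by_contra hd0
    have hd0' : d = 0 := by omega
    rw [hd0'] at hττ1
    norm_num at hττ1
    linarith
  have hd1 : (1 : ℝ) ≤ (d : ℕ) := by exact_mod_cast hd
  have hκpos : (0:ℝ) < κ := lt_of_lt_of_le one_pos hκ1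
  have hfa : (1:ℝ) ≤ (Nat.factorial (d+1) : ℝ) := by
    exact_mod_cast Nat.one_le_iff_ne_zero.2 (Nat.factorial_ne_zero _)
  have hκp : (1:ℝ) ≤ κ ^ (d+1) := one_le_pow₀ hκ1
  have hCCcc : CC / cc ≤ N0 := by
    rw [hN0]
    rw [div_le_div_iff_of_pos_right hccpos]
    have h1' : (1:ℝ) ≤ (Nat.factorial (d+1) : ℝ) * κ ^ (d+1) := by nlinarith
    nlinarith
  have h8N0 : (8:ℝ) ≤ CC / cc := by
    rw [le_div_iff₀ hccpos]; nlinarith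
  have hN1 : 1 < N := by linarith
  have hNpos : 0 < N := by linarith
  have hκN : 1 < κ * N := by nlinarith
  have hCCccN : CC < N * cc := (div_lt_iff₀ hccpos).1 (lt_of_le_of_lt hCCcc hN0N)
  have hτpos : 0 < τ := by linarith
  have hNt_pos : 0 < N ^ τ := Real.rpow_pos_of_pos hNpos τ
  have hND4_pos : 0 < N ^ (4 * (d:ℝ) * τ) := Real.rpow_pos_of_pos hNpos _
  have hsplitτ : N ^ τ = N ^ (τ - 1) * N := by
    rw [← Real.rpow_add_one hNpos.ne' (τ-1), sub_add_cancel]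
  have hsplitD4 : N ^ (4 * (d:ℝ) * τ) = N ^ (4 * (d:ℝ) * τ - 1) * N := by
    rw [← Real.rpow_add_one hNpos.ne' _, sub_add_cancel]
  -- dot bounds
  have hdotμ : ∀ v : Fin d → ℤ, inBall d κ N v →
      |((dotZ v r : ℤ):ℝ) - ((dotZ v m : ℤ):ℝ)| < (μ - μ') * N ^ τ := by
    intro v hv
    have h1' : |((dotZ v (r - m) : ℤ):ℝ)| ≤ enormZ v * enormZ (r - m) := abs_dotZ_le _ _
    rw [dotZ_sub] at h1'
    push_cast at h1'
    have h2' : enormZ v * enormZ (r - m)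
        < (κ * N) * (κ⁻¹ * (μ - μ') * N ^ (τ - 1)) :=
      mul_lt_mul'' hv.2 (lt_of_lt_of_le hdist (min_le_left _ _))
        (enormZ_nonneg _) (enormZ_nonneg _)
    have h3' : (κ * N) * (κ⁻¹ * (μ - μ') * N ^ (τ - 1)) = (μ - μ') * N ^ τ := by
      rw [hsplitτ]
      field_simp
    linarith
  have hdotθ : ∀ v : Fin d → ℤ, inBall d κ N v →
      |((dotZ v r : ℤ):ℝ) - ((dotZ v m : ℤ):ℝ)| < (θ' - θ) * N ^ (4 * (d:ℝ) * τ) := by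
    intro v hv
    have h1' : |((dotZ v (r - m) : ℤ):ℝ)| ≤ enormZ v * enormZ (r - m) := abs_dotZ_le _ _
    rw [dotZ_sub] at h1'
    push_cast at h1'
    have h2' : enormZ v * enormZ (r - m)
        < (κ * N) * (κ⁻¹ * (θ' - θ) * N ^ (4 * (d:ℝ) * τ - 1)) :=
      mul_lt_mul'' hv.2 (lt_of_lt_of_le hdist (min_le_right _ _))
        (enormZ_nonneg _) (enormZ_nonneg _)
    have h3' : (κ * N) * (κ⁻¹ * (θ' - θ) * N ^ (4 * (d:ℝ) * τ - 1))
        = (θ' - θ) * N ^ (4 * (d:ℝ) * τ) := by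
      rw [hsplitD4]
      field_simp
    linarith
  have hμθle : μ * N ^ τ ≤ θ * N ^ (4 * (d:ℝ) * τ) := by
    have hexp : τ + 1 ≤ 4 * (d:ℝ) * τ := by nlinarith
    have hA : N ^ (τ + 1) ≤ N ^ (4 * (d:ℝ) * τ) := (Real.rpow_le_rpow_left_iff hN1).2 hexp
    have hsplit : N ^ (τ+1) = N ^ τ * N := Real.rpow_add_one hNpos.ne' τ
    nlinarith
  -- basic presentation facts
  have hmBall := hm.1.1
  have hrBall := hr.1.1
  have hmLI : LinearIndependent ℝ (fun i : Fin d => castR (vm i.1)) := hm.1.2.1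
  have hrLI : LinearIndependent ℝ (fun i : Fin d => castR (vr i.1)) := hr.1.2.1
  have hmmm : ∀ i < d, dotZ (vm i) m = (pm i : ℤ) := mem_of_pres hm.1 rfl
  have hrmm : ∀ i < d, dotZ (vr i) r = (pr i : ℤ) := mem_of_pres hr.1 rfl
  set SV := Submodule.span ℝ (Set.range fun i : Fin ℓ => castR (vm i.1)) with hSVdef
  have hSVrank : Module.finrank ℝ SV = ℓ := by
    rw [hSVdef, finrank_span_eq_card (prefix_indep hmLI hld)]
    simp
  have hSVtop : ℓ = d → SV = ⊤ := by
    intro hldeq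
    subst hldeq
    have : Nonempty (Fin ℓ) := ⟨⟨0, hd⟩⟩
    exact (prefix_indep hmLI hld).span_eq_top_of_card_eq_finrank (by simp [Module.finrank_pi])
  have hpmμ : ∀ i < ℓ, (pm i : ℝ) < μ' * N ^ τ := by
    intro i hi
    have hℓ0 : ℓ ≠ 0 := by omega
    have hc := hcutμ.resolve_left hℓ0
    have hmono : (pm i : ℤ) ≤ (pm (ℓ-1) : ℤ) := by
      have := opt_min hκN hm (j := i) (by omega) (hmBall (ℓ-1) (by omega))
        (not_mem_span_prefix hmLI (by omega : ℓ-1 < d) (by omega : i ≤ ℓ-1))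
      rwa [hmmm (ℓ-1) (by omega), abs_of_nonneg (by positivity)] at this
    have : (pm i : ℝ) ≤ (pm (ℓ-1) : ℝ) := by exact_mod_cast hmono
    linarith
  -- induction
  have IND : ∀ j, j ≤ ℓ → ∀ i < j, castR (vr i) ∈ SV ∧ (pr i : ℝ) < μ * N ^ τ := by
    intro j
    induction j with
    | zero => intro _ i hi; omega
    | succ j ih =>
      intro hj1 i hi
      have hjℓ : j < ℓ := by omega
      have ihj := ih (by omega)
      rcases Nat.lt_or_ge i j with hij | hij
      · exact ihj i hij
      have hi_eq : i = j := by omega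
      subst hi_eq
      have hjd : i < d := by omega
      -- find vm i0 outside span of first i rows of vr
      have hex : ∃ i0, i0 < ℓ ∧
          castR (vm i0) ∉ Submodule.span ℝ (Set.range fun t : Fin i => castR (vr t.1)) := by
        by_contra hc
        push_neg at hc
        have hSV_le : SV ≤ Submodule.span ℝ (Set.range fun t : Fin i => castR (vr t.1)) := by
          rw [hSVdef]
          apply Submodule.span_le.2
          rintro _ ⟨t, rfl⟩
          exact hc t.1 t.2
        have hr1 : Module.finrank ℝ
            (Submodule.span ℝ (Set.range fun t : Fin i => castR (vr t.1))) ≤ i := by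
          refine le_trans (finrank_span_le_card _) ?_
          rw [Set.toFinset_range]
          exact le_trans Finset.card_image_le (by simp)
        have hr2 : ℓ ≤ Module.finrank ℝ
            (Submodule.span ℝ (Set.range fun t : Fin i => castR (vr t.1))) := by
          rw [← hSVrank]
          exact Submodule.finrank_mono hSV_le
        omega
      obtain ⟨i0, hi0ℓ, hi0⟩ := hex
      have hi0d : i0 < d := by omega
      have hq1 : (pr i : ℤ) ≤ |dotZ (vm i0) r| :=
        opt_min hκN hr hjd (hmBall i0 hi0d) hi0
      have hq1' : (pr i : ℝ) ≤ |((dotZ (vm i0) r : ℤ):ℝ)| := by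
        rw [← Int.cast_abs]
        exact_mod_cast hq1
      have hΔ := hdotμ (vm i0) (hmBall i0 hi0d)
      have hm0 : |((dotZ (vm i0) m : ℤ):ℝ)| = (pm i0 : ℝ) := by
        rw [hmmm i0 hi0d]
        push_cast
        exact abs_of_nonneg (by positivity)
      have habs : |((dotZ (vm i0) r : ℤ):ℝ)|
          ≤ |((dotZ (vm i0) m : ℤ):ℝ)|
            + |((dotZ (vm i0) r : ℤ):ℝ) - ((dotZ (vm i0) m : ℤ):ℝ)| := by
        have := abs_add_le ((dotZ (vm i0) m : ℤ):ℝ)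
          (((dotZ (vm i0) r : ℤ):ℝ) - ((dotZ (vm i0) m : ℤ):ℝ))
        simpa using this
      have hq2 : (pr i : ℝ) < μ * N ^ τ := by
        have := hpmμ i0 hi0ℓ
        have hμsum : μ' * N ^ τ + (μ - μ') * N ^ τ = μ * N ^ τ := by ring
        linarith
      refine ⟨?_, hq2⟩
      by_cases hldeq : ℓ = d
      · rw [hSVtop hldeq]; trivial
      · by_contra hnot
        have hℓd : ℓ < d := by omega
        have hc' : θ' * N ^ (4 * (d:ℝ) * τ) < (pm ℓ : ℝ) := by
          have := hcutθ.resolve_left hldeq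
          exact_mod_cast this
        have ho : (pm ℓ : ℤ) ≤ |dotZ (vr i) m| :=
          opt_min hκN hm hℓd (hrBall i hjd) hnot
        have ho' : (pm ℓ : ℝ) ≤ |((dotZ (vr i) m : ℤ):ℝ)| := by
          rw [← Int.cast_abs]
          exact_mod_cast ho
        have hΔθ := hdotθ (vr i) (hrBall i hjd)
        have hr0 : |((dotZ (vr i) r : ℤ):ℝ)| = (pr i : ℝ) := by
          rw [hrmm i hjd]
          push_cast
          exact abs_of_nonneg (by positivity)
        have habs2 : |((dotZ (vr i) m : ℤ):ℝ)|
            ≤ |((dotZ (vr i) r : ℤ):ℝ)|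
              + |((dotZ (vr i) r : ℤ):ℝ) - ((dotZ (vr i) m : ℤ):ℝ)| := by
          have := abs_add_le ((dotZ (vr i) r : ℤ):ℝ)
            (((dotZ (vr i) m : ℤ):ℝ) - ((dotZ (vr i) r : ℤ):ℝ))
          rw [abs_sub_comm] at this
          simpa using this
        have hsumθ : θ' * N ^ (4 * (d:ℝ) * τ) - (θ' - θ) * N ^ (4 * (d:ℝ) * τ)
            = θ * N ^ (4 * (d:ℝ) * τ) := by ring
        linarith
  have hWin : ∀ i < ℓ, castR (vr i) ∈ SV := fun i hi => (IND ℓ le_rfl i hi).1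
  have hQ : ∀ i < ℓ, (pr i : ℝ) < μ * N ^ τ := fun i hi => (IND ℓ le_rfl i hi).2
  set SW := Submodule.span ℝ (Set.range fun i : Fin ℓ => castR (vr i.1)) with hSWdef
  have hSW_le : SW ≤ SV := by
    rw [hSWdef]
    apply Submodule.span_le.2
    rintro _ ⟨t, rfl⟩
    exact hWin t.1 t.2
  have hSWrank : Module.finrank ℝ SW = ℓ := by
    rw [hSWdef, finrank_span_eq_card (prefix_indep hrLI hld)]
    simp
  have hspan : SW = SV := Submodule.eq_of_le_of_finrank_eq hSW_le (by rw [hSWrank, hSVrank])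
  -- conclusion 1
  have hcut2 : HasCutAt d N θ μ τ pr ℓ := by
    refine ⟨hld, ?_, ?_⟩
    · rcases Nat.eq_zero_or_pos ℓ with h0 | h0
      · exact Or.inl h0
      · exact Or.inr (hQ (ℓ-1) (by omega))
    · by_cases hldeq : ℓ = d
      · exact Or.inl hldeq
      · right
        have hℓd : ℓ < d := by omega
        have hnot : castR (vr ℓ) ∉ SV := by
          rw [← hspan, hSWdef]
          exact not_mem_span_prefix hrLI hℓd le_rfl
        have ho : (pm ℓ : ℤ) ≤ |dotZ (vr ℓ) m| :=
          opt_min hκN hm hℓd (hrBall ℓ hℓd) hnot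
        have ho' : (pm ℓ : ℝ) ≤ |((dotZ (vr ℓ) m : ℤ):ℝ)| := by
          rw [← Int.cast_abs]; exact_mod_cast ho
        have hΔθ := hdotθ (vr ℓ) (hrBall ℓ hℓd)
        have hr0 : |((dotZ (vr ℓ) r : ℤ):ℝ)| = (pr ℓ : ℝ) := by
          rw [hrmm ℓ hℓd]; push_cast; exact abs_of_nonneg (by positivity)
        have habs2 : |((dotZ (vr ℓ) m : ℤ):ℝ)|
            ≤ |((dotZ (vr ℓ) r : ℤ):ℝ)|
              + |((dotZ (vr ℓ) r : ℤ):ℝ) - ((dotZ (vr ℓ) m : ℤ):ℝ)| := by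
          have := abs_add_le ((dotZ (vr ℓ) r : ℤ):ℝ)
            (((dotZ (vr ℓ) m : ℤ):ℝ) - ((dotZ (vr ℓ) r : ℤ):ℝ))
          rw [abs_sub_comm] at this
          simpa using this
        have hc' : θ' * N ^ (4 * (d:ℝ) * τ) < (pm ℓ : ℝ) := by
          have := hcutθ.resolve_left hldeq
          exact_mod_cast this
        linarith
  -- conclusion 3, presentation part
  have hmAm : ∀ i < ℓ, dotZ (vm i) m = (pm i : ℤ) := fun i hi => hmmm i (by omega)
  have hrA' : r ∈ (fun x => x + (r - m)) '' {x | ∀ i < ℓ, dotZ (vm i) x = (pm i : ℤ)} :=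
    ⟨m, hmAm, by ring⟩
  have hApres : (fun x => x + (r - m)) '' {x | ∀ i < ℓ, dotZ (vm i) x = (pm i : ℤ)}
      = {x | ∀ i < ℓ, dotZ (vr i) x = (pr i : ℤ)} := by
    apply Set.ext
    intro x
    constructor
    · rintro ⟨y, hy, rfl⟩ i hi
      have h1' : dotZ (vr i) y = dotZ (vr i) m := by
        have hgen : ∀ g ∈ (Set.range fun t : Fin ℓ => castR (vm t.1)),
            rdot g (castR y - castR m) = 0 := by
          rintro g ⟨t, rfl⟩
          rw [rdot_sub_right, rdot_cast, rdot_cast, hy t.1 t.2, hmmm t.1 (by omega)]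
          ring
        have := rdot_eq_zero_of_mem_span hgen (hWin i hi)
        rw [rdot_sub_right, rdot_cast, rdot_cast, sub_eq_zero] at this
        exact_mod_cast this
      rw [dotZ_add, h1', dotZ_sub, hrmm i (by omega)]
      ring
    · intro hx
      refine ⟨x - (r - m), ?_, by ring⟩
      intro k hk
      have h1' : dotZ (vm k) x = dotZ (vm k) r := by
        have hgen : ∀ g ∈ (Set.range fun t : Fin ℓ => castR (vr t.1)),
            rdot g (castR x - castR r) = 0 := by
          rintro g ⟨t, rfl⟩
          rw [rdot_sub_right, rdot_cast, rdot_cast, hx t.1 t.2, hrmm t.1 (by omega)]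
          ring
        have hmem : castR (vm k) ∈ SW := by
          rw [hspan, hSVdef]
          exact Submodule.subset_span ⟨⟨k, hk⟩, rfl⟩
        have := rdot_eq_zero_of_mem_span hgen (by rw [hSWdef] at hmem; exact hmem)
        rw [rdot_sub_right, rdot_cast, rdot_cast, sub_eq_zero] at this
        exact_mod_cast this
      rw [dotZ_sub, dotZ_sub, h1', hmmm k (by omega)]
      ring
  have hPres : IsPresOf d ℓ κ N
      ((fun x => x + (r - m)) '' {x | ∀ i < ℓ, dotZ (vm i) x = (pm i : ℤ)}) pr vr :=
    ⟨fun i hi => hrBall i (by omega), prefix_indep hrLI hld, hApres⟩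
  -- conclusion 3, optimality part
  have hOpt : ∀ s u, IsPresOf d ℓ κ N
      ((fun x => x + (r - m)) '' {x | ∀ i < ℓ, dotZ (vm i) x = (pm i : ℤ)}) s u →
      presVec d ℓ pr vr = presVec d ℓ s u ∨ slex (presVec d ℓ pr vr) (presVec d ℓ s u) := by
    intro s u hsu
    obtain ⟨huBall, huLI', huA⟩ := hsu
    have huLI : LinearIndependent ℝ (fun i : Fin ℓ => castR (u i.1)) := huLI'
    obtain ⟨z, hz1, hz2⟩ := kernel_complement hld vm (prefix_indep hmLI hld)
    set T := Submodule.span ℝ (Set.range fun t : Fin (d-ℓ) => castR (z t)) with hTdef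
    have hTrank : Module.finrank ℝ T = d - ℓ := by
      rw [hTdef, finrank_span_eq_card hz2]
      simp
    have hSVperp : ∀ w ∈ SV, ∀ t, rdot w (castR (z t)) = 0 := by
      intro w hw t
      apply rdot_eq_zero_of_mem_span (S := Set.range fun i : Fin ℓ => castR (vm i.1))
      · rintro g ⟨a, rfl⟩
        rw [rdot_cast, hz1 t a.1 a.2]
        simp
      · rw [hSVdef] at hw; exact hw
    have hTzero : ∀ b ∈ T, (∀ t, rdot b (castR (z t)) = 0) → b = 0 := by
      intro b hb hperp
      apply eq_zero_of_rdot_self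
      apply rdot_eq_zero_of_mem_span (S := Set.range fun t : Fin (d-ℓ) => castR (z t))
      · rintro g ⟨t, rfl⟩
        rw [rdot_comm]
        exact hperp t
      · rw [hTdef] at hb; exact hb
    have hdisj : SV ⊓ T = ⊥ := by
      rw [eq_bot_iff]
      intro b hb
      have := hTzero b hb.2 (fun t => hSVperp b hb.1 t)
      simpa using this
    have hsup : SV ⊔ T = ⊤ := by
      apply Submodule.eq_top_of_finrank_eq
      have hh := Submodule.finrank_sup_add_finrank_inf_eq SV T
      rw [hdisj, finrank_bot, hSVrank, hTrank] at hh
      rw [Module.finrank_pi]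
      simp at hh ⊢
      omega
    have hu_perp : ∀ i < ℓ, ∀ t, dotZ (u i) (z t) = 0 := by
      intro i hi t
      have hrz : r + z t ∈ (fun x => x + (r - m)) ''
          {x | ∀ i < ℓ, dotZ (vm i) x = (pm i : ℤ)} := by
        refine ⟨m + z t, fun k hk => ?_, by ring⟩
        rw [dotZ_add, hmmm k (by omega), hz1 t k hk]
        ring
      rw [huA] at hrz
      have h1' : dotZ (u i) (r + z t) = (s i : ℤ) := hrz i hi
      have h2' : dotZ (u i) r = (s i : ℤ) := by
        have := hrA'
        rw [huA] at this
        exact this i hi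
      rw [dotZ_add] at h1'
      omega
    have hu_in : ∀ i < ℓ, castR (u i) ∈ SV := by
      intro i hi
      have htop : castR (u i) ∈ SV ⊔ T := by rw [hsup]; trivial
      obtain ⟨a, ha, b, hb, hab⟩ := Submodule.mem_sup.1 htop
      have hbperp : ∀ t, rdot b (castR (z t)) = 0 := by
        intro t
        have h1' : rdot (castR (u i)) (castR (z t)) = 0 := by
          rw [rdot_cast, hu_perp i hi t]
          simp
        rw [← hab, rdot_add_left] at h1'
        have h2' : rdot a (castR (z t)) = 0 := hSVperp a ha t
        linarith
      have hb0 : b = 0 := hTzero b hb hbperp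
      rw [← hab, hb0, add_zero]
      exact ha
    -- combined presentation of {r}
    set U : ℕ → Fin d → ℤ := fun i => if i < ℓ then u i else vr i with hUdef
    set S : ℕ → ℕ := fun i => if i < ℓ then s i else pr i with hSdef
    have hUeval : ∀ i, U i = if i < ℓ then u i else vr i := fun i => rfl
    have hSeval : ∀ i, S i = if i < ℓ then s i else pr i := fun i => rfl
    have hUBall : ∀ i < d, inBall d κ N (U i) := by
      intro i hi
      rw [hUeval]
      by_cases h : i < ℓ
      · rw [if_pos h]; exact huBall i h
      · rw [if_neg h]; exact hrBall i hi
    have hULI : LinearIndependent ℝ (fun i : Fin d => castR (U i.1)) := by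
      have hdd : ℓ + (d - ℓ) = d := by omega
      set e : Fin ℓ ⊕ Fin (d - ℓ) ≃ Fin d := finSumFinEquiv.trans (finCongr hdd) with he
      have hTailLI : LinearIndependent ℝ (fun b : Fin (d-ℓ) => castR (vr (ℓ + b.1))) := by
        have := hrLI.comp (fun b : Fin (d-ℓ) => (⟨ℓ + b.1, by omega⟩ : Fin d))
          (by intro a b hab; have := congrArg Fin.val hab; simp at this; exact Fin.ext this)
        exact this
      have hdisj2 : Disjoint (Submodule.span ℝ (Set.range fun i : Fin ℓ => castR (u i.1)))
          (Submodule.span ℝ (Set.range fun b : Fin (d-ℓ) => castR (vr (ℓ + b.1)))) := by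
        have hle1 : Submodule.span ℝ (Set.range fun i : Fin ℓ => castR (u i.1)) ≤ SW := by
          rw [hspan]
          apply Submodule.span_le.2
          rintro _ ⟨t, rfl⟩
          rw [hSVdef]
          exact hu_in t.1 t.2
        have hds : Disjoint (Set.range (Fin.castLE hld))
            (Set.range (fun b : Fin (d-ℓ) => (⟨ℓ + b.1, by omega⟩ : Fin d))) := by
          rw [Set.disjoint_left]
          rintro a ⟨b, rfl⟩ ⟨c, hc⟩
          have := congrArg Fin.val hc
          simp at this
          omega
        have hbig := hrLI.disjoint_span_image hds
        have hre1 : (Set.range fun i : Fin ℓ => castR (vr i.1))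
            = (fun i : Fin d => castR (vr i.1)) '' (Set.range (Fin.castLE hld)) :=
          range_prefix_eq_image hld
        have hre2 : (Set.range fun b : Fin (d-ℓ) => castR (vr (ℓ + b.1)))
            = (fun i : Fin d => castR (vr i.1)) ''
              (Set.range (fun b : Fin (d-ℓ) => (⟨ℓ + b.1, by omega⟩ : Fin d))) := by
          rw [← Set.range_comp]
          rfl
        rw [hre2]
        refine Disjoint.mono_left ?_ hbig
        refine le_trans hle1 ?_
        rw [hSWdef, hre1]
      have hsum : LinearIndependent ℝ
          (Sum.elim (fun i : Fin ℓ => castR (u i.1))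
            (fun b : Fin (d-ℓ) => castR (vr (ℓ + b.1)))) :=
        huLI.sum_type hTailLI hdisj2
      have hcomp : (fun i : Fin d => castR (U i.1)) ∘ e
          = Sum.elim (fun i : Fin ℓ => castR (u i.1))
            (fun b : Fin (d-ℓ) => castR (vr (ℓ + b.1))) := by
        funext i
        rcases i with a | b
        · have h1' : (e (Sum.inl a)).1 = a.1 := by rw [he]; simp
          show castR (U (e (Sum.inl a)).1) = castR (u a.1)
          rw [hUeval]
          rw [h1', if_pos a.2]
        · have h1' : (e (Sum.inr b)).1 = ℓ + b.1 := by rw [he]; simp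
          show castR (U (e (Sum.inr b)).1) = castR (vr (ℓ + b.1))
          rw [hUeval]
          rw [h1', if_neg (by omega)]
      exact (linearIndependent_equiv e).1 (by rw [hcomp]; exact hsum)
    have hUA : ({r} : Set (Fin d → ℤ)) = {x | ∀ i < d, dotZ (U i) x = (S i : ℤ)} := by
      have hUr : ∀ i < d, dotZ (U i) r = (S i : ℤ) := by
        intro i hi
        rw [hUeval, hSeval]
        by_cases h : i < ℓ
        · rw [if_pos h, if_pos h]
          have := hrA'
          rw [huA] at this
          exact this i h
        · rw [if_neg h, if_neg h]
          exact hrmm i hi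
      apply Set.ext
      intro x
      constructor
      · rintro rfl
        exact hUr
      · intro hx
        have : x = r := eq_of_rows U hULI (fun i hi => by rw [hx i hi, ← hUr i hi])
        rw [this]
        rfl
    have hcmp := hr.2 S U ⟨hUBall, hULI, hUA⟩
    exact pres_compare hld pr s vr u S U hSeval hUeval hcmp
  exact ⟨hcut2, hspan, ⟨hPres, hOpt⟩⟩
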